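/- Let p be an odd prime, k and ℓ positive integers, q = p^k, Q = p^ℓ, and c = (c0,c1,c2,c3) ∈ F_{q²}⁴ with c ≠ (0,0,0,0). Then e2 = 0, θ2 = 0, e3 = 0 and θ3 = 0 all hold simultaneously if and only if there exists λ ∈ F_{q²} such that B(X) = λ·A(X) as polynomials (i.e. the rational function B(X)/A(X) is constant). -/

import Mathlib

open Polynomial

theorem stmt4 (p k ℓ : ℕ) (hp : p.Prime) (hodd : Odd p) (hk : 0 < k) (hl : 0 < ℓ)
    (q Q : ℕ) (hq : q = p ^ k) (hQ : Q = p ^ ℓ)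
    (F : Type) [Field F] [Fintype F] (hF : Fintype.card F = p ^ (2 * k))
    (c0 c1 c2 c3 : F) (hc : ¬(c0 = 0 ∧ c1 = 0 ∧ c2 = 0 ∧ c3 = 0))
    (A B : Polynomial F)
    (hA : A = C c0 * X ^ (Q + 1) + C c1 * X ^ Q + C c2 * X + C c3)
    (hB : B = C (c3 ^ q) * X ^ (Q + 1) + C (c2 ^ q) * X ^ Q + C (c1 ^ q) * X + C (c0 ^ q))
    (e2 e3 θ2 θ3 : F)
    (he2 : e2 = -(c0 * c0 ^ q) - c1 * c1 ^ q + c2 * c2 ^ q + c3 * c3 ^ q)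
    (he3 : e3 = -(c0 * c0 ^ q) + c1 * c1 ^ q - c2 * c2 ^ q + c3 * c3 ^ q)
    (hθ2 : θ2 = c2 ^ q * c3 - c0 ^ q * c1)
    (hθ3 : θ3 = c1 ^ q * c3 - c0 ^ q * c2) :
    (e2 = 0 ∧ θ2 = 0 ∧ e3 = 0 ∧ θ3 = 0) ↔ (∃ lam : F, B = C lam * A) := by
  have hq0 : q ≠ 0 := by
    rw [hq]; exact pow_ne_zero _ hp.pos.ne'
  have hq2 : ∀ x : F, (x ^ q) ^ q = x := by
    intro x
    rw [← pow_mul, hq]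
    have h : p ^ k * p ^ k = p ^ (2 * k) := by rw [← pow_add]; ring_nf
    rw [h, ← hF, FiniteField.pow_card]
  have hQ1 : 1 < Q := by
    rw [hQ]; exact Nat.one_lt_pow hl.ne' hp.one_lt
  have hQ0 : Q ≠ 0 := by omega
  have hQne1 : Q ≠ 1 := by omega
  have hQ1ne0 : Q + 1 ≠ 0 := by omega
  have hQ1ne1 : Q + 1 ≠ 1 := by omega
  have hQ1neQ : Q + 1 ≠ Q := by omega
  -- characteristic
  haveI : CharP F p := by
    rcases CharP.exists F with ⟨r, hr⟩
    haveI := hr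
    have hcard := FiniteField.card F r
    rcases hcard with ⟨n, hn, hFr⟩
    rw [hF] at hFr
    have : r = p := by
      have hd : r ∣ p ^ (2 * k) := by
        rw [hFr]
        exact dvd_pow_self r (Nat.pos_of_ne_zero (by exact_mod_cast n.pos.ne')).ne'
      have := hn.dvd_of_dvd_pow hd
      exact (Nat.prime_dvd_prime_iff_eq hn hp).mp this
    rw [← this]; exact hr
  have two_ne : (2 : F) ≠ 0 := by
    have := CharP.cast_eq_zero_iff F p 2
    intro h
    have hdvd : p ∣ 2 := this.mp (by exact_mod_cast h)
    have hle : p ≤ 2 := Nat.le_of_dvd (by norm_num) hdvd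
    have h2 : 2 ≤ p := hp.two_le
    have hm : p % 2 = 1 := Nat.odd_iff.mp hodd
    omega
  have pow_zero_iff : ∀ x : F, x ^ q = 0 ↔ x = 0 := fun x =>
    pow_eq_zero_iff hq0
  constructor
  · rintro ⟨h2, ht2, h3, ht3⟩
    rw [he2] at h2; rw [he3] at h3; rw [hθ2] at ht2; rw [hθ3] at ht3
    have E03 : c0 * c0 ^ q = c3 * c3 ^ q := by
      have h : 2 * (c0 * c0 ^ q) = 2 * (c3 * c3 ^ q) := by linear_combination -h2 - h3
      exact mul_left_cancel₀ two_ne h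
    have E12 : c1 * c1 ^ q = c2 * c2 ^ q := by
      have h : 2 * (c1 * c1 ^ q) = 2 * (c2 * c2 ^ q) := by linear_combination h3 - h2
      exact mul_left_cancel₀ two_ne h
    have ht2' : c2 ^ q * c3 = c0 ^ q * c1 := by linear_combination ht2
    have ht3' : c1 ^ q * c3 = c0 ^ q * c2 := by linear_combination ht3
    have bt2 : c2 * c3 ^ q = c0 * c1 ^ q := by
      have := congrArg (· ^ q) ht2'
      simpa [mul_pow, hq2] using this
    have bt3 : c1 * c3 ^ q = c0 * c2 ^ q := by
      have := congrArg (· ^ q) ht3'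
      simpa [mul_pow, hq2] using this
    by_cases h0 : c0 = 0
    · have h3z : c3 = 0 := by
        have hz : c3 * c3 ^ q = 0 := by rw [← E03, h0]; ring
        rcases mul_eq_zero.mp hz with h | h
        · exact h
        · exact (pow_zero_iff c3).mp h
      by_cases h1 : c1 = 0
      · exfalso
        apply hc
        refine ⟨h0, h1, ?_, h3z⟩
        have hz : c2 * c2 ^ q = 0 := by rw [← E12, h1]; ring
        rcases mul_eq_zero.mp hz with h | h
        · exact h
        · exact (pow_zero_iff c2).mp h
      · obtain ⟨lam, hlam⟩ : ∃ lam : F, lam * c1 = c2 ^ q := ⟨c2 ^ q / c1, by field_simp⟩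
        have eq1 : c3 ^ q = lam * c0 := by
          rw [h0, (pow_zero_iff c3).mpr h3z]; ring
        have eq2 : c2 ^ q = lam * c1 := hlam.symm
        have eq3 : c1 ^ q = lam * c2 := by
          have h : (c1 ^ q) * c1 = (lam * c2) * c1 := by
            calc (c1 ^ q) * c1 = c2 * c2 ^ q := by linear_combination E12
            _ = c2 * (lam * c1) := by rw [hlam]
            _ = (lam * c2) * c1 := by ring
          exact mul_right_cancel₀ h1 h
        have eq4 : c0 ^ q = lam * c3 := by
          rw [(pow_zero_iff c0).mpr h0, h3z]; ring
        refine ⟨lam, ?_⟩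
        rw [hA, hB, eq1, eq2, eq3, eq4]
        simp only [C_mul]
        ring
    · obtain ⟨lam, hlam⟩ : ∃ lam : F, lam * c0 = c3 ^ q := ⟨c3 ^ q / c0, by field_simp⟩
      have eq1 : c3 ^ q = lam * c0 := hlam.symm
      have eq2 : c2 ^ q = lam * c1 := by
        have h : (c2 ^ q) * c0 = (lam * c1) * c0 := by
          calc (c2 ^ q) * c0 = c1 * c3 ^ q := by linear_combination -bt3
          _ = c1 * (lam * c0) := by rw [hlam]
          _ = (lam * c1) * c0 := by ring
        exact mul_right_cancel₀ h0 h
      have eq3 : c1 ^ q = lam * c2 := by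
        have h : (c1 ^ q) * c0 = (lam * c2) * c0 := by
          calc (c1 ^ q) * c0 = c2 * c3 ^ q := by linear_combination -bt2
          _ = c2 * (lam * c0) := by rw [hlam]
          _ = (lam * c2) * c0 := by ring
        exact mul_right_cancel₀ h0 h
      have eq4 : c0 ^ q = lam * c3 := by
        have h : (c0 ^ q) * c0 = (lam * c3) * c0 := by
          calc (c0 ^ q) * c0 = c3 * c3 ^ q := by linear_combination E03
          _ = c3 * (lam * c0) := by rw [hlam]
          _ = (lam * c3) * c0 := by ring
        exact mul_right_cancel₀ h0 h
      refine ⟨lam, ?_⟩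
      rw [hA, hB, eq1, eq2, eq3, eq4]
      simp only [C_mul]
      ring
  · rintro ⟨lam, hBA⟩
    rw [hA, hB] at hBA
    have h0' : c0 ^ q = lam * c3 := by
      have := congrArg (fun P => coeff P 0) hBA
      simpa [-map_pow, coeff_X_pow, coeff_C, coeff_X, hQ0, hQ1ne0, Ne.symm hQ0, Ne.symm hQ1ne0] using this
    have h1' : c1 ^ q = lam * c2 := by
      have := congrArg (fun P => coeff P 1) hBA
      simpa [-map_pow, coeff_X_pow, coeff_C, coeff_X, hQ0, hQne1, hQ1ne1, Ne.symm hQne1, Ne.symm hQ1ne1] using this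
    have h2' : c2 ^ q = lam * c1 := by
      have := congrArg (fun P => coeff P Q) hBA
      simpa [-map_pow, coeff_X_pow, coeff_C, coeff_X, hQ0, hQne1, hQ1neQ, Ne.symm hQne1, Ne.symm hQ0, Ne.symm hQ1neQ] using this
    have h3' : c3 ^ q = lam * c0 := by
      have := congrArg (fun P => coeff P (Q + 1)) hBA
      simpa [-map_pow, coeff_X_pow, coeff_C, coeff_X, hQ0, hQ1ne0, hQ1ne1, hQ1neQ, Ne.symm hQ1ne0, Ne.symm hQ1ne1, Ne.symm hQ1neQ] using this
    refine ⟨?_, ?_, ?_, ?_⟩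
    · rw [he2, h0', h1', h2', h3']; ring
    · rw [hθ2, h0', h2']; ring
    · rw [he3, h0', h1', h2', h3']; ring
    · rw [hθ3, h0', h1']; ring
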